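/- arXiv:2410.03041 — 3 statements merged into one kernel-verified Lean document; each statement's English description precedes it below -/
import Mathlib

section
/- Fix i ∈ [n] := {1,…,n} and let 𝓘 denote the set of all discrete subintervals of [n]. For intervals I ⊆ J of [n] define C_{I,J} = 1 if I is contained in J without touching either endpoint of J, C_{I,J} = −1 if I = J, and C_{I,J} = 0 otherwise. Let g : 𝓘 → ℝ be any function assigning a real value g(I) to each interval I (representing the local fit (P^{(|I|,r)} y_I)_i), and let λ ≥ 0. Then max over intervals J containing i of [min over intervals I with i ∈ I ⊆ J of (g(I) + λC_{I,J}/|I|)] is at most min over intervals J containing i of [max over intervals I with i ∈ I ⊆ J of (g(I) − λC_{I,J}/|I|)]. -/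
/-- The penalty sign C_{I,J} for an interval I = [c,d] inside J = [a,b]:
−1 if I = J, +1 if I is strictly interior to J (touching neither endpoint), 0 otherwise. -/
noncomputable def Cpen (a b c d : ℕ) : ℝ :=
  if c = a ∧ d = b then -1 else if a < c ∧ d < b then 1 else 0

lemma inner_finite (i a b : ℕ) (f : ℕ → ℕ → ℝ) :
    {w : ℝ | ∃ c d : ℕ, a ≤ c ∧ c ≤ i ∧ i ≤ d ∧ d ≤ b ∧ w = f c d}.Finite := by
  apply Set.Finite.subset (((Set.finite_Icc a i).prod (Set.finite_Icc i b)).image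
    (fun p : ℕ × ℕ => f p.1 p.2))
  rintro w ⟨c, d, hc, hci, hid, hd, rfl⟩
  exact ⟨(c, d), ⟨⟨hc, hci⟩, hid, hd⟩, rfl⟩

lemma cpen_sum (a1 b1 a2 b2 : ℕ) :
    Cpen a1 b1 (max a1 a2) (min b1 b2) + Cpen a2 b2 (max a1 a2) (min b1 b2) ≤ 0 := by
  simp only [Cpen]
  split_ifs <;> norm_num <;> omega

/-- Well-posedness of Minmax Trend Filtering: the max-min of penalized local
fits g(I) + λC_{I,J}/|I| over intervals J ∋ i and subintervals I ∋ i is at most the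
corresponding min-max of g(I) − λC_{I,J}/|I|. -/
theorem stmt13 (n i : ℕ) (h1 : 1 ≤ i) (h2 : i ≤ n) (g : ℕ → ℕ → ℝ)
    (lam : ℝ) (hlam : 0 ≤ lam) :
    sSup {v : ℝ | ∃ a b : ℕ, 1 ≤ a ∧ a ≤ i ∧ i ≤ b ∧ b ≤ n ∧
        v = sInf {w : ℝ | ∃ c d : ℕ, a ≤ c ∧ c ≤ i ∧ i ≤ d ∧ d ≤ b ∧
          w = g c d + lam * Cpen a b c d / ((d : ℝ) - c + 1)}} ≤
    sInf {v : ℝ | ∃ a b : ℕ, 1 ≤ a ∧ a ≤ i ∧ i ≤ b ∧ b ≤ n ∧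
        v = sSup {w : ℝ | ∃ c d : ℕ, a ≤ c ∧ c ≤ i ∧ i ≤ d ∧ d ≤ b ∧
          w = g c d - lam * Cpen a b c d / ((d : ℝ) - c + 1)}} := by
  refine csSup_le ⟨_, i, i, h1, le_rfl, le_rfl, h2, rfl⟩ ?_
  rintro v ⟨a1, b1, ha1, hai1, hib1, hb1, rfl⟩
  refine le_csInf ⟨_, i, i, h1, le_rfl, le_rfl, h2, rfl⟩ ?_
  rintro w ⟨a2, b2, ha2, hai2, hib2, hb2, rfl⟩
  set c := max a1 a2 with hc
  set d := min b1 b2 with hd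
  have hcd : (c : ℝ) ≤ d := by
    have : c ≤ d := le_trans (max_le hai1 hai2) (le_min hib1 hib2)
    exact_mod_cast this
  have hden : (0:ℝ) < (d : ℝ) - c + 1 := by linarith
  have hxmem : g c d + lam * Cpen a1 b1 c d / ((d : ℝ) - c + 1) ∈
      {w : ℝ | ∃ c' d' : ℕ, a1 ≤ c' ∧ c' ≤ i ∧ i ≤ d' ∧ d' ≤ b1 ∧
        w = g c' d' + lam * Cpen a1 b1 c' d' / ((d' : ℝ) - c' + 1)} :=
    ⟨c, d, le_max_left _ _, max_le hai1 hai2, le_min hib1 hib2, min_le_left _ _, rfl⟩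
  have hymem : g c d - lam * Cpen a2 b2 c d / ((d : ℝ) - c + 1) ∈
      {w : ℝ | ∃ c' d' : ℕ, a2 ≤ c' ∧ c' ≤ i ∧ i ≤ d' ∧ d' ≤ b2 ∧
        w = g c' d' - lam * Cpen a2 b2 c' d' / ((d' : ℝ) - c' + 1)} :=
    ⟨c, d, le_max_right _ _, max_le hai1 hai2, le_min hib1 hib2, min_le_right _ _, rfl⟩
  have h₁ := csInf_le (inner_finite i a1 b1 _).bddBelow hxmem
  have h₂ := le_csSup (inner_finite i a2 b2 _).bddAbove hymem
  have hsum := cpen_sum a1 b1 a2 b2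
  have hkey : lam * (Cpen a1 b1 c d + Cpen a2 b2 c d) / ((d : ℝ) - c + 1) ≤ 0 :=
    div_nonpos_of_nonpos_of_nonneg (mul_nonpos_of_nonneg_of_nonpos hlam hsum) hden.le
  have heq : lam * Cpen a1 b1 c d / ((d : ℝ) - c + 1) +
      lam * Cpen a2 b2 c d / ((d : ℝ) - c + 1) =
      lam * (Cpen a1 b1 c d + Cpen a2 b2 c d) / ((d : ℝ) - c + 1) := by ring
  linarith
end

section
/- Fix i ∈ [n], an interval J ⊆ [n] containing i, λ ≥ 0, M ≥ 0, and suppose i is in the interior of J in the sense that Dist(i,∂J) ≥ 1. Then max over subintervals I ⊆ J containing i of [M/√|I| − λ·C_{I,J}/|I|] ≤ M/√(Dist(i,∂J)) + M/√|J| + M²/(4λ) + λ/|J| whenever λ > 0, where C_{I,J} = 1 if I ⊂ J strictly (not touching the boundary of J), C_{I,J} = −1 if I = J, and C_{I,J} = 0 otherwise, and Dist(i,∂J) = min(i − j₁ + 1, j₂ − i + 1) for J = [j₁, j₂]. -/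
lemma aux_amgm (M lam x : ℝ) (hM : 0 ≤ M) (hlam : 0 < lam) (hx : 0 < x) :
    M / Real.sqrt x - lam / x ≤ M ^ 2 / (4 * lam) := by
  have ht0 : 0 < Real.sqrt x := Real.sqrt_pos.2 hx
  have hx' : x = Real.sqrt x ^ 2 := (Real.sq_sqrt hx.le).symm
  rw [show lam / x = lam / Real.sqrt x ^ 2 by rw [← hx'],
    div_sub_div _ _ (ne_of_gt ht0) (by positivity),
    div_le_div_iff₀ (by positivity) (by positivity)]
  nlinarith [sq_nonneg (M * Real.sqrt x - 2 * lam)]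

/-- For any subinterval I = [c,d] of J = [j₁,j₂] containing i,
M/√|I| − λ C_{I,J}/|I| ≤ M/√Dist(i,∂J) + M/√|J| + M²/(4λ) + λ/|J|. -/
theorem stmt14 (n i j1 j2 : ℕ) (M lam : ℝ) (hM : 0 ≤ M) (hlam : 0 < lam)
    (hj1 : 1 ≤ j1) (hij1 : j1 ≤ i) (hij2 : i ≤ j2) (hj2 : j2 ≤ n)
    (hdist : 1 ≤ min (i - j1 + 1) (j2 - i + 1)) :
    ∀ c d : ℕ, j1 ≤ c → c ≤ i → i ≤ d → d ≤ j2 →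
      M / Real.sqrt ((d : ℝ) - c + 1) - lam * Cpen j1 j2 c d / ((d : ℝ) - c + 1) ≤
        M / Real.sqrt ((min (i - j1 + 1) (j2 - i + 1) : ℕ) : ℝ)
          + M / Real.sqrt ((j2 : ℝ) - j1 + 1)
          + M ^ 2 / (4 * lam) + lam / ((j2 : ℝ) - j1 + 1) := by
  intro c d hc hci hid hd
  have hcd : (c : ℝ) ≤ d := by exact_mod_cast hci.trans hid
  have hI : (0:ℝ) < (d : ℝ) - c + 1 := by linarith
  have hJ : (0:ℝ) < (j2 : ℝ) - j1 + 1 := by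
    have : (j1 : ℝ) ≤ j2 := by exact_mod_cast hij1.trans hij2
    linarith
  have hDist : ((min (i - j1 + 1) (j2 - i + 1) : ℕ) : ℝ) =
      min ((i : ℝ) - j1 + 1) ((j2 : ℝ) - i + 1) := by
    push_cast [Nat.cast_min, Nat.cast_sub hij1, Nat.cast_sub hij2]
    ring_nf
  have hD0 : (0:ℝ) < min ((i : ℝ) - j1 + 1) ((j2 : ℝ) - i + 1) := by
    have h1 : (j1 : ℝ) ≤ i := by exact_mod_cast hij1
    have h2 : (i : ℝ) ≤ j2 := by exact_mod_cast hij2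
    simp only [lt_min_iff]; constructor <;> linarith
  have hterm1 : 0 ≤ M / Real.sqrt ((min (i - j1 + 1) (j2 - i + 1) : ℕ) : ℝ) := by positivity
  have hterm2 : 0 ≤ M / Real.sqrt ((j2 : ℝ) - j1 + 1) := by positivity
  have hterm3 : 0 ≤ M ^ 2 / (4 * lam) := by positivity
  have hterm4 : 0 ≤ lam / ((j2 : ℝ) - j1 + 1) := by positivity
  unfold Cpen
  by_cases h1 : c = j1 ∧ d = j2
  · -- I = J case
    obtain ⟨hc1, hd1⟩ := h1
    have e1 : (c : ℝ) = j1 := by exact_mod_cast hc1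
    have e2 : (d : ℝ) = j2 := by exact_mod_cast hd1
    rw [if_pos ⟨hc1, hd1⟩, e1, e2,
      show lam * (-1) / ((j2 : ℝ) - j1 + 1) = -(lam / ((j2 : ℝ) - j1 + 1)) by ring]
    linarith
  · rw [if_neg h1]
    by_cases h2 : j1 < c ∧ d < j2
    · -- strictly interior
      rw [if_pos h2]
      have := aux_amgm M lam ((d : ℝ) - c + 1) hM hlam hI
      have heq : lam * 1 / ((d : ℝ) - c + 1) = lam / ((d : ℝ) - c + 1) := by ring
      rw [heq]
      linarith
    · -- touches one boundary
      rw [if_neg h2]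
      have hbound : min ((i : ℝ) - j1 + 1) ((j2 : ℝ) - i + 1) ≤ (d : ℝ) - c + 1 := by
        have hc' : (j1 : ℝ) ≤ c := by exact_mod_cast hc
        have hci' : (c : ℝ) ≤ i := by exact_mod_cast hci
        have hid' : (i : ℝ) ≤ d := by exact_mod_cast hid
        have hd' : (d : ℝ) ≤ j2 := by exact_mod_cast hd
        rcases eq_or_lt_of_le hc with hcj | hcj
        · have : (c : ℝ) = j1 := by exact_mod_cast hcj.symm
          calc min ((i : ℝ) - j1 + 1) ((j2 : ℝ) - i + 1) ≤ (i : ℝ) - j1 + 1 := min_le_left _ _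
            _ ≤ (d : ℝ) - c + 1 := by rw [this]; linarith
        · have hdj : d = j2 := by
            by_contra hdj
            exact h2 ⟨hcj, lt_of_le_of_ne hd hdj⟩
          subst hdj
          calc min ((i : ℝ) - j1 + 1) ((d : ℝ) - i + 1) ≤ (d : ℝ) - i + 1 := min_le_right _ _
            _ ≤ (d : ℝ) - c + 1 := by linarith
      have hmono : M / Real.sqrt ((d : ℝ) - c + 1) ≤
          M / Real.sqrt ((min (i - j1 + 1) (j2 - i + 1) : ℕ) : ℝ) := by
        rw [hDist]
        exact div_le_div_of_nonneg_left hM (Real.sqrt_pos.2 hD0) (Real.sqrt_le_sqrt hbound)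
      have : lam * 0 / ((d : ℝ) - c + 1) = 0 := by ring
      rw [this]
      linarith
end

section
/- Fix i ∈ [n] and construct the set 𝓡_i = {r₀, r₁, r₂, …} ⊆ [i:n] by the dyadic scheme: r₀ = i, and given r_j (a right endpoint of a dyadic interval at level −j of the complete binary tree over [n], with n a power of 2), r_{j+1} is the right endpoint of the parent of the node containing r_j if that node is a left child, and the right endpoint of the right neighbor of the parent otherwise, stopping when r_j = n. Then for every j ≥ 1, 2^j ≤ r_{j+1} − r_j ≤ 2^{j+1}, the sequence is strictly increasing, and the cardinality of 𝓡_i is O(log n). -/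
/-- The dyadic right-endpoint sequence `r₀ = i`, `r_{j+1}` = right endpoint of the parent
(if the node of `r_j` at level −j is a left child) or of the right neighbor of the parent
(otherwise); arithmetically `r_{j+1} = 2^{j+1}·(⌊r_j/2^{j+1}⌋ + 1)`, capped at `n`. -/
def dyadSeq (n i : ℕ) : ℕ → ℕ
  | 0 => i
  | j + 1 => min n (2 ^ (j + 1) * (dyadSeq n i j / 2 ^ (j + 1) + 1))

lemma dyad_le (n i : ℕ) (h : i ≤ n) : ∀ j, dyadSeq n i j ≤ n
  | 0 => h
  | _ + 1 => min_le_left _ _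

lemma lt_unc (x j : ℕ) : x < 2^(j+1) * (x / 2^(j+1) + 1) := by
  have hp : 0 < 2^(j+1) := pow_pos (by norm_num) _
  have h1 := Nat.div_add_mod x (2^(j+1))
  have h2 := Nat.mod_lt x hp
  have h3 : 2^(j+1) * (x/2^(j+1)+1) = 2^(j+1)*(x/2^(j+1)) + 2^(j+1) := by ring
  omega

lemma dyad_lt_next (n i j : ℕ) (h : dyadSeq n i j < n) :
    dyadSeq n i j < dyadSeq n i (j+1) := by
  show dyadSeq n i j < min n _
  exact lt_min h (lt_unc _ _)

lemma dyad_ge (n i : ℕ) (h : i ≤ n) : ∀ j, i ≤ dyadSeq n i j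
  | 0 => le_refl _
  | j+1 => le_min h ((dyad_ge n i h j).trans (lt_unc _ _).le)

lemma dyad_dvd_or (n i j : ℕ) : 2^(j+1) ∣ dyadSeq n i (j+1) ∨ dyadSeq n i (j+1) = n := by
  show 2^(j+1) ∣ min n (2^(j+1) * (dyadSeq n i j / 2^(j+1) + 1)) ∨ _
  rcases le_total n (2^(j+1) * (dyadSeq n i j / 2^(j+1) + 1)) with h | h
  · right; exact min_eq_left h
  · left; rw [min_eq_right h]; exact Dvd.intro _ rfl

lemma dyad_diff (H n i j : ℕ) (hn : n = 2 ^ H) (hi1 : 1 ≤ i) (hin : i ≤ n)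
    (hj : 1 ≤ j) (hlt : dyadSeq n i j < n) :
    2 ^ j ≤ dyadSeq n i (j + 1) - dyadSeq n i j ∧
      dyadSeq n i (j + 1) - dyadSeq n i j ≤ 2 ^ (j + 1) := by
  obtain ⟨k, rfl⟩ : ∃ k, j = k + 1 := ⟨j - 1, by omega⟩
  have hd : 2 ^ (k+1) ∣ dyadSeq n i (k+1) := by
    rcases dyad_dvd_or n i k with h | h
    · exact h
    · exact absurd h (Nat.ne_of_lt hlt)
  obtain ⟨m, hm⟩ := hd
  set r := dyadSeq n i (k+1) with hrdef
  have hr1 : 1 ≤ r := hi1.trans (dyad_ge n i hin (k+1))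
  have hm1 : 1 ≤ m := Nat.one_le_iff_ne_zero.mpr (by rintro rfl; simp at hm; omega)
  have hjH : k + 1 < H := by
    have h1 : 2 ^ (k+1) ≤ r := by
      calc 2^(k+1) = 2^(k+1) * 1 := (mul_one _).symm
        _ ≤ 2^(k+1) * m := Nat.mul_le_mul_left _ hm1
        _ = r := hm.symm
    have : 2 ^ (k+1) < 2 ^ H := by omega
    exact (Nat.pow_lt_pow_iff_right (by norm_num)).mp this
  obtain ⟨k', hk'⟩ : 2 ^ (k+1) ∣ n := hn ▸ pow_dvd_pow 2 hjH.le
  have hrn : r + 2 ^ (k+1) ≤ n := by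
    have hmk : m < k' := by
      have : 2 ^ (k+1) * m < 2 ^ (k+1) * k' := by rw [← hm, ← hk']; exact hlt
      exact Nat.lt_of_mul_lt_mul_left this
    calc r + 2^(k+1) = 2^(k+1) * (m + 1) := by rw [hm]; ring
      _ ≤ 2^(k+1) * k' := Nat.mul_le_mul_left _ hmk
      _ = n := hk'.symm
  have hgoal : dyadSeq n i (k + 1 + 1) = min n (2 ^ (k+2) * (r / 2 ^ (k+2) + 1)) := rfl
  have hpos : 0 < 2^(k+2) := pow_pos (by norm_num) _
  have hpow : (2:ℕ)^(k+2) = 2 * 2^(k+1) := by ring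
  rcases Nat.even_or_odd m with ⟨q, hq⟩ | ⟨q, hq⟩
  · have hm' : r = 2^(k+2)*q := by rw [hm, hq]; ring
    have hdiv : r / 2^(k+2) = q := by rw [hm', Nat.mul_div_cancel_left _ hpos]
    have hu : 2^(k+2) * (r / 2^(k+2) + 1) = 2^(k+2)*q + 2^(k+2) := by rw [hdiv]; ring
    have hU1 : min n (2^(k+2) * (r / 2^(k+2) + 1)) ≤ 2^(k+2) * (r / 2^(k+2) + 1) :=
      min_le_right _ _
    have hU2 : r + 2^(k+1) ≤ min n (2^(k+2) * (r / 2^(k+2) + 1)) :=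
      le_min hrn (by omega)
    rw [hgoal]; constructor <;> omega
  · have hm' : r = 2^(k+2)*q + 2^(k+1) := by rw [hm, hq]; ring
    have hdiv : r / 2^(k+2) = q := by
      rw [hm', Nat.mul_add_div hpos, Nat.div_eq_of_lt (by omega), add_zero]
    have hu : 2^(k+2) * (r / 2^(k+2) + 1) = 2^(k+2)*q + 2^(k+2) := by rw [hdiv]; ring
    have hU1 : min n (2^(k+2) * (r / 2^(k+2) + 1)) ≤ 2^(k+2) * (r / 2^(k+2) + 1) :=
      min_le_right _ _
    have hU2 : r + 2^(k+1) ≤ min n (2^(k+2) * (r / 2^(k+2) + 1)) :=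
      le_min hrn (by omega)
    rw [hgoal]; constructor <;> omega

lemma dyad_reaches (H n i : ℕ) (hn : n = 2 ^ H) (hi1 : 1 ≤ i) (hin : i ≤ n) :
    dyadSeq n i H = n := by
  cases H with
  | zero =>
    have : n = 1 := by rw [hn]; rfl
    show i = n
    omega
  | succ k =>
    rcases dyad_dvd_or n i k with h | h
    · have hr1 : 1 ≤ dyadSeq n i (k+1) := hi1.trans (dyad_ge n i hin (k+1))
      have h1 : n ≤ dyadSeq n i (k+1) := hn.le.trans (Nat.le_of_dvd (by omega) h)
      have h2 : dyadSeq n i (k+1) ≤ n := dyad_le n i hin (k+1)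
      omega
    · exact h

/-- For n = 2^H and 1 ≤ i ≤ n, the dyadic sequence 𝓡_i = {r₀, r₁, …}
satisfies 2^j ≤ r_{j+1} − r_j ≤ 2^{j+1} for every j ≥ 1 (before reaching n), is strictly
increasing until it reaches n, and its cardinality is O(log n). -/
theorem stmt17 :
    ∃ C : ℝ, 0 < C ∧
      ∀ (H n i : ℕ), n = 2 ^ H → 1 ≤ i → i ≤ n →
        (∀ j : ℕ, 1 ≤ j → dyadSeq n i j < n →
          2 ^ j ≤ dyadSeq n i (j + 1) - dyadSeq n i j ∧
            dyadSeq n i (j + 1) - dyadSeq n i j ≤ 2 ^ (j + 1)) ∧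
        (∀ j : ℕ, dyadSeq n i j < n → dyadSeq n i j < dyadSeq n i (j + 1)) ∧
        (∃ N : ℕ, dyadSeq n i N = n ∧ (N : ℝ) ≤ C * (Real.log n + 1)) := by
  refine ⟨2, by norm_num, fun H n i hn hi1 hin => ⟨?_, ?_, ?_⟩⟩
  · exact fun j hj hlt => dyad_diff H n i j hn hi1 hin hj hlt
  · exact fun j hlt => dyad_lt_next n i j hlt
  · refine ⟨H, dyad_reaches H n i hn hi1 hin, ?_⟩
    have hlog : Real.log n = H * Real.log 2 := by
      rw [hn]; push_cast; rw [Real.log_pow]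
    have hl2 : (0.6931471803:ℝ) < Real.log 2 := Real.log_two_gt_d9
    have hH : (0:ℝ) ≤ H := Nat.cast_nonneg H
    rw [hlog]
    nlinarith [mul_nonneg hH (by linarith : (0:ℝ) ≤ 2 * Real.log 2 - 1)]
end
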